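/- Let η > 0 and c₁₀, c₀₁ ∈ ℝ. Let C : ℝ → M₃(ℝ) take symmetric positive definite values, and let Cᵢ : ℝ → M₃(ℝ) be differentiable with Cᵢ(t) invertible for all t, satisfying the evolution equation Cᵢ'(t) = (1/η)·(c₁₀·C̄(t)·Cᵢ(t)⁻¹ − c₀₁·Cᵢ(t)·C̄(t)⁻¹)^D·Cᵢ(t) for all t, where C̄(t) := (det C(t))^{-1/3}·C(t). If det Cᵢ(0) = 1, then det Cᵢ(t) = 1 for all t. That is, the exact flow of the multiplicative Maxwell model preserves inelastic incompressibility. -/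

import Mathlib

open Matrix

abbrev Mat := Matrix (Fin 3) (Fin 3) ℝ

attribute [local instance] Matrix.frobeniusNormedAddCommGroup Matrix.frobeniusNormedSpace

/-- The unimodular part of a matrix. -/
noncomputable def unimod (M : Mat) : Mat := (M.det ^ (-(1 : ℝ) / 3)) • M

/-- The deviatoric part of a matrix. -/
noncomputable def dev (M : Mat) : Mat := M - (M.trace / 3) • (1 : Mat)

/-- The right-hand side of the Maxwell flow rule for the Mooney–Rivlin potential. -/
noncomputable def maxwellRHS (η c10 c01 : ℝ) (C Ci : Mat) : Mat :=
  (1 / η) • (dev (c10 • (unimod C * Ci⁻¹) - c01 • (Ci * (unimod C)⁻¹)) * Ci)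

lemma trace_dev (M : Mat) : (dev M).trace = 0 := by
  simp [dev, Matrix.trace_smul, Matrix.trace_one]

noncomputable def entryCLM (i j : Fin 3) : Mat →L[ℝ] ℝ :=
  LinearMap.toContinuousLinearMap (Matrix.entryLinearMap ℝ ℝ i j)

lemma hasDerivAt_entry {A : ℝ → Mat} {A' : Mat} {t : ℝ} (h : HasDerivAt A A' t)
    (i j : Fin 3) : HasDerivAt (fun s => A s i j) (A' i j) t :=
  ((entryCLM i j).hasFDerivAt.comp_hasDerivAt t h :)

lemma jacobi_zero {A : ℝ → Mat} {G : Mat} {t : ℝ} (hG : G.trace = 0)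
    (h : HasDerivAt A (G * A t) t) : HasDerivAt (fun s => (A s).det) 0 t := by
  have e : ∀ i j, HasDerivAt (fun s => A s i j) ((G * A t) i j) t :=
    fun i j => hasDerivAt_entry h i j
  simp only [Matrix.det_fin_three]
  have H := (((((((e 0 0).mul (e 1 1)).mul (e 2 2)).sub
      (((e 0 0).mul (e 1 2)).mul (e 2 1))).sub
      (((e 0 1).mul (e 1 0)).mul (e 2 2))).add
      (((e 0 1).mul (e 1 2)).mul (e 2 0))).add
      (((e 0 2).mul (e 1 0)).mul (e 2 1))).sub
      (((e 0 2).mul (e 1 1)).mul (e 2 0))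
  refine H.congr_deriv ?_
  symm
  have htr : G 0 0 + G 1 1 + G 2 2 = 0 := by
    simpa [Matrix.trace_fin_three] using hG
  simp only [Matrix.mul_apply, Fin.sum_univ_three, Pi.mul_apply]
  linear_combination (-(A t 0 0) * A t 1 1 * A t 2 2 + A t 0 0 * A t 1 2 * A t 2 1
    + A t 0 1 * A t 1 0 * A t 2 2 - A t 0 1 * A t 1 2 * A t 2 0
    - A t 0 2 * A t 1 0 * A t 2 1 + A t 0 2 * A t 1 1 * A t 2 0) * htr

/-- the exact flow of the multiplicative Maxwell model preserves the
inelastic incompressibility: if `det Cᵢ(0) = 1`, then `det Cᵢ(t) = 1` for all `t`. -/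
theorem maxwell_preserves_incompressibility (η c10 c01 : ℝ) (hη : 0 < η)
    (C Ci : ℝ → Mat) (hC : ∀ t, (C t).PosDef) (hCi : ∀ t, IsUnit (Ci t))
    (hflow : ∀ t, HasDerivAt Ci (maxwellRHS η c10 c01 (C t) (Ci t)) t)
    (h0 : (Ci 0).det = 1) :
    ∀ t, (Ci t).det = 1 := by
  set G : ℝ → Mat := fun t =>
    (1 / η) • dev (c10 • (unimod (C t) * (Ci t)⁻¹) - c01 • (Ci t * (unimod (C t))⁻¹))
    with hGdef
  have hflow' : ∀ t, HasDerivAt Ci (G t * Ci t) t := by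
    intro t
    have : maxwellRHS η c10 c01 (C t) (Ci t) = G t * Ci t := by
      rw [hGdef, maxwellRHS, smul_mul_assoc]
    exact this ▸ hflow t
  have hG : ∀ t, (G t).trace = 0 := by
    intro t
    rw [hGdef]
    simp [Matrix.trace_smul, trace_dev]
  have hd : ∀ t, HasDerivAt (fun s => (Ci s).det) 0 t :=
    fun t => jacobi_zero (hG t) (hflow' t)
  intro t
  have := is_const_of_deriv_eq_zero (f := fun s => (Ci s).det)
    (fun s => (hd s).differentiableAt) (fun s => (hd s).deriv) t 0
  simpa [h0] using this
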